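/- Let {K_n} be a finite family of incoherent 2×2 complex matrices with ∑_n K_n† K_n = I, let ρ be a 2×2 density matrix, and set σ = ∑_n K_n ρ K_n†. Then |σ₀₁| ≤ |ρ₀₁|; that is, the l₁ norm of coherence C_{l₁}(σ) = 2|σ₀₁| does not exceed C_{l₁}(ρ) = 2|ρ₀₁|. -/

import Mathlib

open Matrix
open scoped ComplexOrder

/-- A 2×2 complex matrix is incoherent if each of its columns has at most one
nonzero entry. -/
def Incoherent (K : Matrix (Fin 2) (Fin 2) ℂ) : Prop :=
  ∀ j i i' : Fin 2, K i j ≠ 0 → K i' j ≠ 0 → i = i'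

/-- An incoherent operation does not increase the `l₁`-norm of coherence of a qubit
state: `|σ₀₁| ≤ |ρ₀₁|` for `σ = ∑ₙ Kₙ ρ Kₙᴴ`. -/
theorem io_l1_coherence_nonincreasing (n : ℕ)
    (K : Fin n → Matrix (Fin 2) (Fin 2) ℂ)
    (hinc : ∀ i, Incoherent (K i)) (hsum : ∑ i, (K i)ᴴ * K i = 1)
    (ρ : Matrix (Fin 2) (Fin 2) ℂ) (hρ : ρ.PosSemidef) (htr : ρ.trace = 1) :
    ‖(∑ i, K i * ρ * (K i)ᴴ) 0 1‖ ≤ ‖ρ 0 1‖ := by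
  classical
  set a : Fin n → ℂ := fun i => K i 0 0 with ha
  set b : Fin n → ℂ := fun i => K i 0 1 with hb
  set c : Fin n → ℂ := fun i => K i 1 0 with hc
  set d : Fin n → ℂ := fun i => K i 1 1 with hd
  have hac : ∀ i, a i * star (c i) = 0 := by
    intro i
    by_contra h
    have h1 : a i ≠ 0 := fun h0 => h (by simp [h0])
    have h2 : c i ≠ 0 := fun h0 => h (by simp [h0])
    have := hinc i 0 0 1 h1 h2
    exact absurd this (by decide)
  have hbd : ∀ i, b i * star (d i) = 0 := by
    intro i
    by_contra h
    have h1 : b i ≠ 0 := fun h0 => h (by simp [h0])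
    have h2 : d i ≠ 0 := fun h0 => h (by simp [h0])
    have := hinc i 1 0 1 h1 h2
    exact absurd this (by decide)
  -- entry formula
  have hentry : (∑ i, K i * ρ * (K i)ᴴ) 0 1
      = ∑ i, (a i * ρ 0 1 * star (d i) + b i * ρ 1 0 * star (c i)) := by
    rw [Matrix.sum_apply]
    refine Finset.sum_congr rfl fun i _ => ?_
    have : (K i * ρ * (K i)ᴴ) 0 1
        = (a i * ρ 0 0 + b i * ρ 1 0) * star (c i)
          + (a i * ρ 0 1 + b i * ρ 1 1) * star (d i) := by
      simp [Matrix.mul_apply, Matrix.conjTranspose_apply, Fin.sum_univ_two, ha, hb, hc, hd]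
      try ring
    rw [this]
    linear_combination ρ 0 0 * hac i + ρ 1 1 * hbd i
  -- Hermitian: |ρ 1 0| = |ρ 0 1|
  have hherm : ρ 1 0 = star (ρ 0 1) := (hρ.isHermitian.apply 1 0).symm
  have habs10 : ‖ρ 1 0‖ = ‖ρ 0 1‖ := by
    rw [hherm]; simp
  -- normalization entries
  have h00 : ∑ i, (‖a i‖ ^ 2 + ‖c i‖ ^ 2) = 1 := by
    have := congrFun (congrFun hsum 0) 0
    rw [Matrix.sum_apply] at this
    simp only [Matrix.mul_apply, Matrix.conjTranspose_apply, Fin.sum_univ_two,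
      Matrix.one_apply_eq] at this
    have : ∑ i, ((‖a i‖ ^ 2 + ‖c i‖ ^ 2 : ℝ) : ℂ) = 1 := by
      rw [← this]
      refine Finset.sum_congr rfl fun i _ => ?_
      simp only [Complex.star_def]
      rw [← Complex.normSq_eq_conj_mul_self, ← Complex.normSq_eq_conj_mul_self,
        Complex.normSq_eq_norm_sq, Complex.normSq_eq_norm_sq]
      push_cast
      ring
    exact_mod_cast this
  have h11 : ∑ i, (‖b i‖ ^ 2 + ‖d i‖ ^ 2) = 1 := by
    have := congrFun (congrFun hsum 1) 1
    rw [Matrix.sum_apply] at this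
    simp only [Matrix.mul_apply, Matrix.conjTranspose_apply, Fin.sum_univ_two,
      Matrix.one_apply_eq] at this
    have : ∑ i, ((‖b i‖ ^ 2 + ‖d i‖ ^ 2 : ℝ) : ℂ) = 1 := by
      rw [← this]
      refine Finset.sum_congr rfl fun i _ => ?_
      simp only [Complex.star_def]
      rw [← Complex.normSq_eq_conj_mul_self, ← Complex.normSq_eq_conj_mul_self,
        Complex.normSq_eq_norm_sq, Complex.normSq_eq_norm_sq]
      push_cast
      ring
    exact_mod_cast this
  -- main estimate
  rw [hentry]
  calc ‖∑ i, (a i * ρ 0 1 * star (d i) + b i * ρ 1 0 * star (c i))‖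
      ≤ ∑ i, ‖a i * ρ 0 1 * star (d i) + b i * ρ 1 0 * star (c i)‖ := by
        exact norm_sum_le _ _
    _ ≤ ∑ i, (‖a i‖ * ‖d i‖
          + ‖b i‖ * ‖c i‖) * ‖ρ 0 1‖ := by
        refine Finset.sum_le_sum fun i _ => ?_
        calc ‖a i * ρ 0 1 * star (d i) + b i * ρ 1 0 * star (c i)‖
            ≤ ‖a i * ρ 0 1 * star (d i)‖
              + ‖b i * ρ 1 0 * star (c i)‖ := norm_add_le _ _
          _ = (‖a i‖ * ‖d i‖
              + ‖b i‖ * ‖c i‖) * ‖ρ 0 1‖ := by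
              simp only [norm_mul, habs10, RCLike.star_def, Complex.norm_conj]
              ring
    _ = (∑ i, (‖a i‖ * ‖d i‖
          + ‖b i‖ * ‖c i‖)) * ‖ρ 0 1‖ := by
        rw [Finset.sum_mul]
    _ ≤ 1 * ‖ρ 0 1‖ := by
        refine mul_le_mul_of_nonneg_right ?_ (norm_nonneg _)
        have hsum2 : ∑ i, (‖a i‖ * ‖d i‖
            + ‖b i‖ * ‖c i‖)
            ≤ ∑ i, ((‖a i‖ ^ 2 + ‖c i‖ ^ 2) / 2
              + (‖b i‖ ^ 2 + ‖d i‖ ^ 2) / 2) := by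
          refine Finset.sum_le_sum fun i _ => ?_
          nlinarith [sq_nonneg (‖a i‖ - ‖d i‖),
            sq_nonneg (‖b i‖ - ‖c i‖)]
        calc _ ≤ _ := hsum2
          _ = 1 := by rw [Finset.sum_add_distrib, ← Finset.sum_div, ← Finset.sum_div,
                h00, h11]; norm_num
    _ = ‖ρ 0 1‖ := one_mul _
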